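/- Fix ε > 0 and define G : ℝ² → ℝ³ by G(u, v) = (N1, N2, N3), where N1 = I11·u + (ε/2)·v·(I13·u + I23·v) + (ε²/4)·u·(I11·u² + I22·v²), N2 = I22·v − (ε/2)·u·(I13·u + I23·v) + (ε²/4)·v·(I11·u² + I22·v²), N3 = I13·u + I23·v + (ε/2)·u·v·(I22 − I11). Then G(0, 0) = (0, 0, 0), G is differentiable at (0, 0), and the image of the derivative of G at (0, 0) equals the plane d* = {(X, Y, Z) ∈ ℝ³ : I11·I22·Z = I13·I22·X + I11·I23·Y}. In particular the discrete momentum locus G(ℝ²) and the plane d* are tangent at the origin. -/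

import Mathlib

noncomputable section

/-- The parametrisation of the discrete momentum locus of the consistent (Cayley-based)
discretisation of the Suslov problem with time step `ε`. -/
def Gcay (I11 I22 I13 I23 ε : ℝ) : ℝ × ℝ → ℝ × ℝ × ℝ := fun p =>
  (I11 * p.1 + (ε / 2) * p.2 * (I13 * p.1 + I23 * p.2)
      + (ε ^ 2 / 4) * p.1 * (I11 * p.1 ^ 2 + I22 * p.2 ^ 2),
   I22 * p.2 - (ε / 2) * p.1 * (I13 * p.1 + I23 * p.2)
      + (ε ^ 2 / 4) * p.2 * (I11 * p.1 ^ 2 + I22 * p.2 ^ 2),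
   I13 * p.1 + I23 * p.2 + (ε / 2) * p.1 * p.2 * (I22 - I11))

/-- The discrete momentum locus of the consistent (Cayley-based)
discretisation of the Suslov problem passes through the origin, the parametrisation is
differentiable at `(0,0)`, and the image of its derivative there is the constraint plane
`d*`; hence the momentum locus and `d*` are tangent at the origin. -/
theorem suslov_momentum_locus_tangent_consistent
    (I11 I22 I13 I23 : ℝ) (hI11 : 0 < I11) (hI22 : 0 < I22)
    (ε : ℝ) (hε : 0 < ε) :
    Gcay I11 I22 I13 I23 ε (0, 0) = (0, 0, 0) ∧
      DifferentiableAt ℝ (Gcay I11 I22 I13 I23 ε) (0, 0) ∧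
      Set.range (fderiv ℝ (Gcay I11 I22 I13 I23 ε) (0, 0)) =
        {p : ℝ × ℝ × ℝ | I11 * I22 * p.2.2 = I13 * I22 * p.1 + I11 * I23 * p.2.1} := by
  have hI11' : I11 ≠ 0 := ne_of_gt hI11
  have hI22' : I22 ≠ 0 := ne_of_gt hI22
  set fst := ContinuousLinearMap.fst ℝ ℝ ℝ
  set snd := ContinuousLinearMap.snd ℝ ℝ ℝ
  set L : (ℝ × ℝ) →L[ℝ] ℝ × ℝ × ℝ :=
    (I11 • fst).prod ((I22 • snd).prod (I13 • fst + I23 • snd)) with hLdef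
  have hu : HasFDerivAt (fun p : ℝ × ℝ => p.1) fst ((0, 0) : ℝ × ℝ) := hasFDerivAt_fst
  have hv : HasFDerivAt (fun p : ℝ × ℝ => p.2) snd ((0, 0) : ℝ × ℝ) := hasFDerivAt_snd
  have h13 : HasFDerivAt (fun p : ℝ × ℝ => I13 * p.1 + I23 * p.2)
      (I13 • fst + I23 • snd) ((0, 0) : ℝ × ℝ) :=
    (hu.const_mul I13).add (hv.const_mul I23)
  have hu2 : HasFDerivAt (fun p : ℝ × ℝ => p.1 ^ 2) (0 : (ℝ × ℝ) →L[ℝ] ℝ) ((0, 0) : ℝ × ℝ) := by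
    simpa [pow_two] using hu.fun_mul hu
  have hv2 : HasFDerivAt (fun p : ℝ × ℝ => p.2 ^ 2) (0 : (ℝ × ℝ) →L[ℝ] ℝ) ((0, 0) : ℝ × ℝ) := by
    simpa [pow_two] using hv.fun_mul hv
  have hq := (hu2.const_mul I11).fun_add (hv2.const_mul I22)
  have hf1 : HasFDerivAt
      (fun p : ℝ × ℝ => I11 * p.1 + (ε / 2) * p.2 * (I13 * p.1 + I23 * p.2)
        + (ε ^ 2 / 4) * p.1 * (I11 * p.1 ^ 2 + I22 * p.2 ^ 2))
      (I11 • fst) ((0, 0) : ℝ × ℝ) := by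
    have hA := (hv.const_mul (ε / 2)).fun_mul h13
    have hB := (hu.const_mul (ε ^ 2 / 4)).fun_mul hq
    have := ((hu.const_mul I11).fun_add hA).fun_add hB
    simpa using this
  have hf2 : HasFDerivAt
      (fun p : ℝ × ℝ => I22 * p.2 - (ε / 2) * p.1 * (I13 * p.1 + I23 * p.2)
        + (ε ^ 2 / 4) * p.2 * (I11 * p.1 ^ 2 + I22 * p.2 ^ 2))
      (I22 • snd) ((0, 0) : ℝ × ℝ) := by
    have hA := (hu.const_mul (ε / 2)).fun_mul h13
    have hB := (hv.const_mul (ε ^ 2 / 4)).fun_mul hq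
    have := ((hv.const_mul I22).fun_sub hA).fun_add hB
    simpa using this
  have hf3 : HasFDerivAt
      (fun p : ℝ × ℝ => I13 * p.1 + I23 * p.2 + (ε / 2) * p.1 * p.2 * (I22 - I11))
      (I13 • fst + I23 • snd) ((0, 0) : ℝ × ℝ) := by
    have hC := ((hu.const_mul (ε / 2)).fun_mul hv).mul_const (I22 - I11)
    have := h13.fun_add hC
    simpa using this
  have hG : HasFDerivAt (Gcay I11 I22 I13 I23 ε) L ((0, 0) : ℝ × ℝ) :=
    hf1.prodMk (hf2.prodMk hf3)
  have hfd : fderiv ℝ (Gcay I11 I22 I13 I23 ε) (0, 0) = L := hG.fderiv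
  refine ⟨by simp [Gcay], hG.differentiableAt, ?_⟩
  rw [hfd]
  ext ⟨X, Y, Z⟩
  simp only [Set.mem_range, Set.mem_setOf_eq]
  constructor
  · rintro ⟨⟨u, v⟩, h⟩
    have h1 : I11 * u = X := by
      have := congrArg Prod.fst h
      simpa [hLdef, fst, snd] using this
    have h2 : I22 * v = Y := by
      have := congrArg (fun q => q.2.1) h
      simpa [hLdef, fst, snd] using this
    have h3 : I13 * u + I23 * v = Z := by
      have := congrArg (fun q => q.2.2) h
      simpa [hLdef, fst, snd] using this
    subst h1 h2 h3
    ring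
  · intro h
    refine ⟨(X / I11, Y / I22), ?_⟩
    have h3 : I13 * (X / I11) + I23 * (Y / I22) = Z := by
      field_simp
      linear_combination -h
    simp [hLdef, fst, snd, h3]
    constructor <;> field_simp
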